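/- If a(s)/(log s)^{2γ} → a_∞ as s → +∞ for constants γ > 0 and a_∞ > 0, then g(s)/s^{1-ε} → +∞ for every ε ∈ (0,1) and g(s)/s → 0 as s → +∞. In particular, for every ε ∈ (0,1) there exists R > 0 such that s^{1-ε} ≤ g(s) ≤ s for all s ≥ R. -/

import Mathlib

open Filter Topology


/-- Comparison: if f' ≤ h' on [s₀,∞) and f s₀ ≤ h s₀ then f ≤ h on [s₀,∞). -/
lemma aux_le_of_hasDerivAt_le {f h f' h' : ℝ → ℝ} {s₀ : ℝ}
    (hf : ∀ t, s₀ ≤ t → HasDerivAt f (f' t) t)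
    (hh : ∀ t, s₀ ≤ t → HasDerivAt h (h' t) t)
    (hle : ∀ t, s₀ ≤ t → f' t ≤ h' t)
    (h0 : f s₀ ≤ h s₀) : ∀ s, s₀ ≤ s → f s ≤ h s := by
  intro s hs
  have hmono : MonotoneOn (fun t => h t - f t) (Set.Ici s₀) := by
    apply monotoneOn_of_deriv_nonneg (convex_Ici s₀)
    · intro t ht
      exact (((hh t ht).sub (hf t ht)).continuousAt).continuousWithinAt
    · intro t ht
      rw [interior_Ici] at ht
      exact (((hh t ht.le).sub (hf t ht.le)).differentiableAt).differentiableWithinAt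
    · intro t ht
      rw [interior_Ici] at ht
      rw [show (fun t => h t - f t) = h - f from rfl, ((hh t ht.le).sub (hf t ht.le)).deriv]
      linarith [hle t ht.le]
  have := hmono (Set.self_mem_Ici) (Set.mem_Ici.2 hs) hs
  simp only at this
  linarith

theorem stmt_4 (a g : ℝ → ℝ) (ha : ContDiff ℝ 1 a) (ν : ℝ) (hν : 0 < ν)
    (hab : ∀ s, ν ≤ a s)
    (hg : ∀ s, HasDerivAt g (1 / Real.sqrt (a (g s))) s) (hg0 : g 0 = 0)
    (γ aInf : ℝ) (hγ : 0 < γ) (haInf : 0 < aInf)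
    (haAsym : Tendsto (fun s => a s / (Real.log s) ^ (2 * γ)) atTop (𝓝 aInf)) :
    (∀ ε : ℝ, ε ∈ Set.Ioo (0:ℝ) 1 →
      Tendsto (fun s => g s / s ^ (1 - ε)) atTop atTop) ∧
    Tendsto (fun s => g s / s) atTop (𝓝 0) ∧
    (∀ ε : ℝ, ε ∈ Set.Ioo (0:ℝ) 1 →
      ∃ R : ℝ, 0 < R ∧ ∀ s, R ≤ s → s ^ (1 - ε) ≤ g s ∧ g s ≤ s) := by
  have hapos : ∀ x, 0 < a x := fun x => lt_of_lt_of_le hν (hab x)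
  have hsq : ∀ x, 0 < Real.sqrt (a x) := fun x => Real.sqrt_pos.2 (hapos x)
  have hg'pos : ∀ s, 0 < 1 / Real.sqrt (a (g s)) := fun s => one_div_pos.2 (hsq _)
  have hmono : StrictMono g := strictMono_of_hasDerivAt_pos hg hg'pos
  have hgnn : ∀ s, 0 ≤ s → 0 ≤ g s := fun s hs => hg0 ▸ hmono.monotone hs
  -- g tends to infinity
  have gtop : Tendsto g atTop atTop := by
    apply tendsto_atTop_atTop_of_monotone hmono.monotone
    by_contra hb
    push_neg at hb
    obtain ⟨b, hbb⟩ := hb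
    have hb0 : 0 < b := hg0 ▸ hbb 0
    -- a is bounded on Icc 0 b
    obtain ⟨A, hA⟩ := (isCompact_Icc.image ha.continuous).bddAbove
    have hAb : ∀ x ∈ Set.Icc (0:ℝ) b, a x ≤ A := fun x hx => hA ⟨x, hx, rfl⟩
    have hA0 : 0 < A := lt_of_lt_of_le (hapos 0) (hAb 0 ⟨le_refl _, hb0.le⟩)
    have hsA : 0 < Real.sqrt A := Real.sqrt_pos.2 hA0
    -- compare with t/√A on [0,∞)
    have hcomp : ∀ s, (0:ℝ) ≤ s → s / Real.sqrt A ≤ g s := by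
      apply aux_le_of_hasDerivAt_le (f' := fun _ => 1 / Real.sqrt A)
        (h' := fun t => 1 / Real.sqrt (a (g t)))
      · intro t ht
        simpa [one_div, div_eq_mul_inv] using (hasDerivAt_id t).div_const (Real.sqrt A)
      · intro t _; exact hg t
      · intro t ht
        have hmem : g t ∈ Set.Icc (0:ℝ) b := ⟨hgnn t ht, (hbb t).le⟩
        have := hAb _ hmem
        exact one_div_le_one_div_of_le (hsq _) (Real.sqrt_le_sqrt this)
      · simp [hg0]
    have := hcomp (Real.sqrt A * (b + 1)) (by positivity)
    rw [mul_comm, mul_div_assoc, div_self hsA.ne', mul_one] at this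
    linarith [hbb ((b + 1) * Real.sqrt A)]
  have hcompA : Tendsto (fun s => a (g s) / (Real.log (g s)) ^ (2 * γ)) atTop (𝓝 aInf) :=
    haAsym.comp gtop
  have hloggtop : Tendsto (fun s => (Real.log (g s)) ^ (2 * γ)) atTop atTop :=
    (tendsto_rpow_atTop (by positivity)).comp (Real.tendsto_log_atTop.comp gtop)
  have hag : Tendsto (fun s => a (g s)) atTop atTop :=
    Tendsto.num hloggtop haInf hcompA
  have hsqtop : Tendsto (fun s => Real.sqrt (a (g s))) atTop atTop := by
    have h12 : Tendsto Real.sqrt atTop atTop := by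
      refine (tendsto_rpow_atTop (by norm_num : (0:ℝ) < 1/2)).congr fun x => ?_
      exact (Real.sqrt_eq_rpow x).symm
    exact h12.comp hag
  have hderiv0 : Tendsto (fun s => 1 / Real.sqrt (a (g s))) atTop (𝓝 0) := by
    have := hsqtop.inv_tendsto_atTop
    simp only [one_div]
    exact this
  -- g s / s → 0
  have part2 : Tendsto (fun s => g s / s) atTop (𝓝 0) := by
    rw [Metric.tendsto_atTop]
    intro ε hε
    obtain ⟨s₀', hs₀'⟩ := Metric.tendsto_atTop.1 hderiv0 (ε / 2) (by linarith)
    set s₀ := max s₀' 0 with hs₀def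
    have hs₀0 : (0:ℝ) ≤ s₀ := le_max_right _ _
    have hds : ∀ t, s₀ ≤ t → 1 / Real.sqrt (a (g t)) ≤ ε / 2 := by
      intro t ht
      have := hs₀' t (le_trans (le_max_left _ _) ht)
      rw [Real.dist_eq, sub_zero, abs_of_pos (hg'pos t)] at this
      linarith
    have hcomp2 : ∀ s, s₀ ≤ s → g s ≤ g s₀ + ε / 2 * (s - s₀) := by
      apply aux_le_of_hasDerivAt_le (f' := fun t => 1 / Real.sqrt (a (g t)))
        (h' := fun _ => ε / 2)
      · intro t _; exact hg t
      · intro t _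
        have h1 : HasDerivAt (fun t : ℝ => t - s₀) 1 t := (hasDerivAt_id t).sub_const s₀
        simpa using (h1.const_mul (ε / 2)).const_add (g s₀)
      · exact hds
      · simp
    refine ⟨max s₀ (max 1 (2 * g s₀ / ε + 1)), fun s hs => ?_⟩
    have h1 : s₀ ≤ s := le_trans (le_max_left _ _) hs
    have h2 : (1:ℝ) ≤ s := le_trans (le_trans (le_max_left _ _) (le_max_right _ _)) hs
    have h3 : 2 * g s₀ / ε + 1 ≤ s := le_trans (le_trans (le_max_right _ _) (le_max_right _ _)) hs
    have hspos : (0:ℝ) < s := lt_of_lt_of_le one_pos h2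
    rw [Real.dist_eq, sub_zero, abs_of_nonneg (div_nonneg (hgnn s hspos.le) hspos.le)]
    have hub := hcomp2 s h1
    have hgs₀nn : 0 ≤ g s₀ := hgnn s₀ hs₀0
    have hgs₀ : g s₀ / s < ε / 2 := by
      rw [div_lt_iff₀ hspos]
      have hc : 2 * g s₀ / ε * ε = 2 * g s₀ := div_mul_cancel₀ _ (ne_of_gt hε)
      nlinarith
    have hlin : ε / 2 * (s - s₀) / s ≤ ε / 2 := by
      rw [div_le_iff₀ hspos]
      nlinarith
    calc g s / s ≤ (g s₀ + ε / 2 * (s - s₀)) / s := by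
          gcongr
      _ = g s₀ / s + ε / 2 * (s - s₀) / s := by ring
      _ < ε / 2 + ε / 2 := by linarith
      _ = ε := by ring
  have part1 : ∀ ε : ℝ, ε ∈ Set.Ioo (0:ℝ) 1 →
      Tendsto (fun s => g s / s ^ (1 - ε)) atTop atTop := by
    have hgles : ∀ᶠ s in atTop, g s ≤ s := by
      filter_upwards [part2.eventually_lt_const one_pos, eventually_gt_atTop (0:ℝ)]
        with s h1 h2
      exact ((div_lt_one h2).1 h1).le
    have hsa : 0 < Real.sqrt (2 * aInf) := Real.sqrt_pos.2 (by linarith)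
    have hev : ∀ᶠ s in atTop, Real.sqrt (a (g s)) ≤ Real.sqrt (2 * aInf) * Real.log s ^ γ := by
      have e1 : ∀ᶠ s in atTop, a (g s) / (Real.log (g s)) ^ (2 * γ) < 2 * aInf :=
        hcompA.eventually_lt_const (by linarith)
      have e2 : ∀ᶠ s in atTop, Real.exp 1 ≤ g s := gtop.eventually_ge_atTop _
      filter_upwards [e1, e2, hgles] with s h1 h2 h3
      have hgs1 : (1:ℝ) ≤ g s := le_trans (Real.one_le_exp (by norm_num)) h2
      have hlog1 : 1 ≤ Real.log (g s) := (Real.le_log_iff_exp_le (by linarith)).2 h2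
      have hlogs : Real.log (g s) ≤ Real.log s :=
        (Real.log_le_log_iff (by linarith) (by linarith)).2 h3
      have hlogs0 : (0:ℝ) ≤ Real.log s := le_trans (by linarith) hlogs
      have hLpos : (0:ℝ) < Real.log (g s) ^ (2 * γ) :=
        lt_of_lt_of_le one_pos (Real.one_le_rpow hlog1 (by positivity))
      have hbound : a (g s) ≤ 2 * aInf * Real.log s ^ (2 * γ) := by
        have hd := (div_lt_iff₀ hLpos).1 h1
        have hmono2 : Real.log (g s) ^ (2 * γ) ≤ Real.log s ^ (2 * γ) :=
          Real.rpow_le_rpow (by linarith) hlogs (by positivity)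
        nlinarith
      calc Real.sqrt (a (g s)) ≤ Real.sqrt (2 * aInf * Real.log s ^ (2 * γ)) :=
            Real.sqrt_le_sqrt hbound
        _ = Real.sqrt (2 * aInf) * Real.log s ^ γ := by
            rw [Real.sqrt_mul (by positivity)]
            congr 1
            rw [Real.sqrt_eq_rpow, ← Real.rpow_mul hlogs0]
            congr 1
            ring
    intro ε ⟨hε0, hε1⟩
    set δ := ε / 2 with hδdef
    have hδ0 : 0 < δ := by positivity
    have h1δ : 0 < 1 - δ := by simp only [hδdef]; linarith
    -- eventually s^(-δ) ≤ g' s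
    have hlo : ∀ᶠ s in atTop, s ^ (-δ) ≤ 1 / Real.sqrt (a (g s)) := by
      have hlittle := (isLittleO_log_rpow_rpow_atTop γ hδ0).def
        (c := 1 / Real.sqrt (2 * aInf)) (by positivity)
      filter_upwards [hev, hlittle, eventually_ge_atTop (Real.exp 1)] with s h1 h2 h3
      have hs0 : (0:ℝ) < s := lt_of_lt_of_le (Real.exp_pos 1) h3
      have hlog0 : (0:ℝ) ≤ Real.log s :=
        le_trans zero_le_one ((Real.le_log_iff_exp_le hs0).2 h3)
      rw [Real.norm_eq_abs, Real.norm_eq_abs, abs_of_nonneg (by positivity),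
        abs_of_nonneg (by positivity)] at h2
      have key : Real.sqrt (a (g s)) ≤ s ^ δ := by
        calc Real.sqrt (a (g s)) ≤ Real.sqrt (2 * aInf) * Real.log s ^ γ := h1
          _ ≤ Real.sqrt (2 * aInf) * (1 / Real.sqrt (2 * aInf) * s ^ δ) := by
              exact mul_le_mul_of_nonneg_left h2 hsa.le
          _ = s ^ δ := by field_simp
      rw [Real.rpow_neg hs0.le, ← one_div]
      exact one_div_le_one_div_of_le (hsq _) key
    obtain ⟨s₁', hs₁'⟩ := eventually_atTop.1 hlo
    set s₁ := max s₁' 1 with hs₁def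
    have hs₁1 : (1:ℝ) ≤ s₁ := le_max_right _ _
    have hs₁0 : (0:ℝ) < s₁ := lt_of_lt_of_le one_pos hs₁1
    have hcomp3 : ∀ s, s₁ ≤ s → (s ^ (1 - δ) - s₁ ^ (1 - δ)) / (1 - δ) + g s₁ ≤ g s := by
      apply aux_le_of_hasDerivAt_le (f' := fun t => t ^ (-δ))
        (h' := fun t => 1 / Real.sqrt (a (g t)))
      · intro t ht
        have ht0 : (0:ℝ) < t := lt_of_lt_of_le hs₁0 ht
        have h1 : HasDerivAt (fun u : ℝ => u ^ (1 - δ)) ((1 - δ) * t ^ (1 - δ - 1)) t :=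
          Real.hasDerivAt_rpow_const (Or.inl ht0.ne')
        have h2 := ((h1.sub_const (s₁ ^ (1 - δ))).div_const (1 - δ)).add_const (g s₁)
        refine h2.congr_deriv ?_
        rw [mul_comm, mul_div_assoc, div_self h1δ.ne', mul_one]
        congr 1
        ring
      · intro t _; exact hg t
      · intro t ht; exact hs₁' t (le_trans (le_max_left _ _) ht)
      · simp
    have hev2 : ∀ᶠ s in atTop, 2 * (s₁ ^ (1 - δ) - (1 - δ) * g s₁) ≤ s ^ (1 - δ) :=
      (tendsto_rpow_atTop h1δ).eventually_ge_atTop _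
    apply tendsto_atTop_mono' atTop (f₁ := fun s => s ^ (ε / 2) / (2 * (1 - δ)))
    · filter_upwards [hev2, eventually_ge_atTop s₁, eventually_ge_atTop (1:ℝ)]
        with s hs2 hss₁ hs1
      have hs0 : (0:ℝ) < s := lt_of_lt_of_le one_pos hs1
      have hgl := hcomp3 s hss₁
      have hgs : s ^ (1 - δ) / (2 * (1 - δ)) ≤ g s := by
        have hstep : s ^ (1 - δ) / (2 * (1 - δ)) ≤ (s ^ (1 - δ) - s₁ ^ (1 - δ)) / (1 - δ) + g s₁ := by
          rw [div_le_iff₀ (by positivity)]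
          have e : ((s ^ (1 - δ) - s₁ ^ (1 - δ)) / (1 - δ) + g s₁) * (2 * (1 - δ))
              = 2 * (s ^ (1 - δ) - s₁ ^ (1 - δ)) + g s₁ * (2 * (1 - δ)) := by
            field_simp
          rw [e]
          linarith
        linarith
      have hsplit : s ^ ((1:ℝ) - δ) = s ^ (ε / 2) * s ^ (1 - ε) := by
        rw [← Real.rpow_add hs0]
        congr 1
        rw [hδdef]; ring
      rw [div_le_div_iff₀ (by positivity) (by positivity : (0:ℝ) < s ^ (1 - ε))]
      calc s ^ (ε / 2) * s ^ (1 - ε) = s ^ (1 - δ) := hsplit.symm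
        _ ≤ g s * (2 * (1 - δ)) := (div_le_iff₀ (by positivity)).1 hgs
    · exact (tendsto_rpow_atTop (by positivity : (0:ℝ) < ε / 2)).atTop_div_const (by positivity)
  refine ⟨part1, part2, ?_⟩
  intro ε hε
  have hgles : ∀ᶠ s in atTop, g s ≤ s := by
    filter_upwards [part2.eventually_lt_const one_pos, eventually_gt_atTop (0:ℝ)]
      with s h1 h2
    exact ((div_lt_one h2).1 h1).le
  have h1 := (part1 ε hε).eventually_ge_atTop 1
  obtain ⟨R₀, hR₀⟩ := eventually_atTop.1 ((h1.and hgles).and (eventually_ge_atTop (1:ℝ)))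
  refine ⟨max R₀ 1, lt_of_lt_of_le one_pos (le_max_right _ _), fun s hs => ?_⟩
  obtain ⟨⟨hb1, hb2⟩, hb3⟩ := hR₀ s (le_trans (le_max_left _ _) hs)
  refine ⟨?_, hb2⟩
  have hs0 : (0:ℝ) < s := lt_of_lt_of_le one_pos hb3
  have hp : (0:ℝ) < s ^ (1 - ε) := Real.rpow_pos_of_pos hs0 _
  exact (one_le_div hp).1 hb1
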